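/- arXiv:1204.5068 — 5 statements merged into one kernel-verified Lean document; each statement's English description precedes it below -/
import Mathlib

section
/- Let α, β > 1 and A, B > 0. There exists a > 0, depending only on α, β, A and B, with the following property. Let (Ω, P) be a probability space carrying ℕ-valued random variables X and Y_0, Y_1, Y_2, … that are mutually independent, where each Y_i has the same distribution as a ℕ-valued random variable Y. Suppose E[α^X] ≤ A and E[β^Y] ≤ B. Define Z(ω) = ∑_{i < X(ω)} Y_i(ω), the number of grandchildren in the two-generation branching process in which the root has X children and each child independently has Y children. Then for every natural number s, P(Z ≥ s) ≤ A·e^{−a·s}. -/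
open MeasureTheory ProbabilityTheory ENNReal

lemma aux_iIndepFun_comp_right {ι ι' Ω β : Type*} {mΩ : MeasurableSpace Ω} {mβ : MeasurableSpace β}
    {μ : Measure Ω} {f : ι → Ω → β} (h : iIndepFun f μ)
    {g : ι' → ι} (hg : Function.Injective g) :
    iIndepFun (fun i => f (g i)) μ := by
  classical
  rw [iIndepFun_iff_measure_inter_preimage_eq_mul] at h ⊢
  intro S sets hsets
  have h' := h (S.map ⟨g, hg⟩) (sets := Function.extend g sets (fun _ => Set.univ)) ?_
  · have e1 : (⋂ i ∈ S.map ⟨g, hg⟩, f i ⁻¹' Function.extend g sets (fun _ => Set.univ) i)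
        = ⋂ j ∈ S, f (g j) ⁻¹' sets j := by
      ext x
      simp only [Set.mem_iInter, Finset.mem_map, Function.Embedding.coeFn_mk]
      constructor
      · intro hx j hj
        have := hx (g j) ⟨j, hj, rfl⟩
        rwa [hg.extend_apply] at this
      · rintro hx i ⟨j, hj, rfl⟩
        rw [hg.extend_apply]
        exact hx j hj
    have e2 : ∏ i ∈ S.map ⟨g, hg⟩, μ (f i ⁻¹' Function.extend g sets (fun _ => Set.univ) i)
        = ∏ j ∈ S, μ (f (g j) ⁻¹' sets j) := by
      rw [Finset.prod_map]
      refine Finset.prod_congr rfl fun j hj => ?_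
      simp [hg.extend_apply]
    rw [e1, e2] at h'
    exact h'
  · intro i hi
    rcases Finset.mem_map.mp hi with ⟨j, hj, rfl⟩
    simpa [hg.extend_apply] using hsets j hj

lemma aux_lintegral_prod {Ω : Type} {mΩ : MeasurableSpace Ω} {μ : Measure Ω}
    [IsProbabilityMeasure μ] {g : ℕ → Ω → ℝ≥0∞}
    (hindep : iIndepFun g μ) (hmeas : ∀ i, Measurable (g i))
    (n : ℕ) :
    ∫⁻ ω, ∏ i ∈ Finset.range n, g i ω ∂μ = ∏ i ∈ Finset.range n, ∫⁻ ω, g i ω ∂μ := by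
  induction n with
  | zero => simp
  | succ n ih =>
    have hprodmeas : Measurable (∏ j ∈ Finset.range n, g j) := by
      rw [Finset.prod_fn]
      exact Finset.measurable_prod _ fun i _ => hmeas i
    have hi := hindep.indepFun_prod_range_succ hmeas n
    have := lintegral_mul_eq_lintegral_mul_lintegral_of_indepFun hprodmeas (hmeas n) hi
    simp only [Finset.prod_range_succ]
    calc ∫⁻ ω, (∏ i ∈ Finset.range n, g i ω) * g n ω ∂μ
        = ∫⁻ ω, (∏ j ∈ Finset.range n, g j) ω * g n ω ∂μ := by
          simp [Finset.prod_apply]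
      _ = (∫⁻ ω, (∏ j ∈ Finset.range n, g j) ω ∂μ) * ∫⁻ ω, g n ω ∂μ := this
      _ = (∏ i ∈ Finset.range n, ∫⁻ ω, g i ω ∂μ) * ∫⁻ ω, g n ω ∂μ := by
          rw [← ih]; simp [Finset.prod_apply]

lemma aux_indep_X_prod {Ω : Type} {mΩ : MeasurableSpace Ω} {μ : Measure Ω}
    {X : Ω → ℕ} {Ys : ℕ → Ω → ℕ} (hX : Measurable X) (hYs : ∀ i, Measurable (Ys i))
    (h : iIndepFun (fun o : Option ℕ => o.elim X Ys) μ)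
    (γ : ℝ≥0∞) (n : ℕ) :
    IndepFun X (fun ω => ∏ i ∈ Finset.range n, γ ^ Ys i ω) μ := by
  classical
  set f : Option ℕ → Ω → ℕ := fun o => o.elim X Ys with hf
  have hmeas : ∀ o, Measurable (f o) := by rintro (_ | i); exacts [hX, hYs i]
  set T : Finset (Option ℕ) := (Finset.range n).map Function.Embedding.some with hT
  have hdisj : Disjoint ({none} : Finset (Option ℕ)) T := by
    simp [hT, Finset.disjoint_left]
  have base := h.indepFun_finset {none} T hdisj hmeas
  have hnone : none ∈ ({none} : Finset (Option ℕ)) := Finset.mem_singleton_self _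
  set φ1 : (({none} : Finset (Option ℕ)) → ℕ) → ℕ := fun v => v ⟨none, hnone⟩ with hφ1
  set φ2 : (↥T → ℕ) → ℝ≥0∞ :=
    fun v => ∏ j ∈ T.attach, γ ^ v j with hφ2
  have mφ1 : Measurable φ1 := measurable_pi_apply _
  have mφ2 : Measurable φ2 :=
    Finset.measurable_prod _ fun j _ =>
      (measurable_of_countable fun k : ℕ => γ ^ k).comp (measurable_pi_apply j)
  have res := base.comp mφ1 mφ2
  have e1 : (φ1 ∘ fun a (i : ({none} : Finset (Option ℕ))) => f i a) = X := rfl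
  have e2 : (φ2 ∘ fun a (i : ↥T) => f i a)
      = fun ω => ∏ i ∈ Finset.range n, γ ^ Ys i ω := by
    funext a
    show ∏ j ∈ T.attach, γ ^ f j a = _
    rw [Finset.prod_attach T (fun o => γ ^ f o a), hT, Finset.prod_map]
    rfl
  rw [e1, e2] at res
  exact res


/-- **Two-generation branching processes have exponential tails.**
If `E[α^X] ≤ A` and `E[β^Y] ≤ B` for some `α, β > 1`, then the number of
grandchildren `Z = ∑_{i < X} Y_i` of the two-generation branching process in
which the root has `X` children and each child independently has `Y` children
satisfies `P(Z ≥ s) ≤ A e^{-a s}`, where `a > 0` depends only on `α, β, A, B`. -/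
theorem two_generation_branching_tail (α β A B : ℝ) (hα : 1 < α) (hβ : 1 < β)
    (hA : 0 < A) (hB : 0 < B) :
    ∃ a : ℝ, 0 < a ∧
      ∀ (Ω : Type) (_ : MeasurableSpace Ω) (P : Measure Ω), IsProbabilityMeasure P →
        ∀ (X Y : Ω → ℕ) (Ys : ℕ → Ω → ℕ),
          Measurable X → Measurable Y → (∀ i, Measurable (Ys i)) →
          iIndepFun (fun o : Option ℕ => o.elim X Ys) P →
          (∀ i, P.map (Ys i) = P.map Y) →
          (∫⁻ ω, (ENNReal.ofReal α) ^ X ω ∂P) ≤ ENNReal.ofReal A →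
          (∫⁻ ω, (ENNReal.ofReal β) ^ Y ω ∂P) ≤ ENNReal.ofReal B →
          ∀ s : ℕ,
            P {ω | s ≤ ∑ i ∈ Finset.range (X ω), Ys i ω} ≤
              ENNReal.ofReal (A * Real.exp (-a * s)) := by
  classical
  have hβ0 : (0:ℝ) < β := lt_trans one_pos hβ
  have hα0 : (0:ℝ) < α := lt_trans one_pos hα
  set M : ℝ := max B 2 with hM
  have hM1 : (1:ℝ) < M := lt_of_lt_of_le one_lt_two (le_max_right _ _)
  set θ : ℝ := min 2⁻¹ (Real.log α / Real.log M) with hθ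
  have hθ0 : 0 < θ := lt_min (by norm_num) (div_pos (Real.log_pos hα) (Real.log_pos hM1))
  have hθ1 : θ < 1 := lt_of_le_of_lt (min_le_left _ _) (by norm_num)
  set γ : ℝ := β ^ θ with hγ
  have hγ1 : 1 < γ := by
    rw [hγ, Real.one_lt_rpow_iff_of_pos hβ0]
    exact Or.inl ⟨hβ, hθ0⟩
  have hγ0 : (0:ℝ) < γ := lt_trans one_pos hγ1
  have hBθ : B ^ θ ≤ α := by
    have h1 : B ^ θ ≤ M ^ θ := Real.rpow_le_rpow hB.le (le_max_left _ _) hθ0.le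
    have h2 : M ^ θ = Real.exp (Real.log M * θ) := by
      rw [Real.rpow_def_of_pos (lt_trans one_pos hM1)]
    have h3 : Real.log M * θ ≤ Real.log α := by
      have := min_le_right 2⁻¹ (Real.log α / Real.log M)
      calc Real.log M * θ ≤ Real.log M * (Real.log α / Real.log M) := by
            exact mul_le_mul_of_nonneg_left (hθ ▸ this) (Real.log_pos hM1).le
        _ = Real.log α := by rw [mul_comm, div_mul_cancel₀ _ (Real.log_pos hM1).ne']
    calc B ^ θ ≤ M ^ θ := h1
      _ = Real.exp (Real.log M * θ) := h2
      _ ≤ Real.exp (Real.log α) := Real.exp_le_exp.mpr h3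
      _ = α := Real.exp_log hα0
  refine ⟨Real.log γ, Real.log_pos hγ1, ?_⟩
  intro Ω mΩ P hP X Y Ys hX hY hYs hindep hmap hαX hβY s
  set α' : ℝ≥0∞ := ENNReal.ofReal α with hα'
  set β' : ℝ≥0∞ := ENNReal.ofReal β with hβ'
  set γ' : ℝ≥0∞ := ENNReal.ofReal γ with hγ'
  have hγ'1 : 1 ≤ γ' := by
    rw [hγ', ← ENNReal.ofReal_one]
    exact ENNReal.ofReal_le_ofReal hγ1.le
  set Z : Ω → ℕ := fun ω => ∑ i ∈ Finset.range (X ω), Ys i ω with hZ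
  have hZmeas : Measurable Z := by
    apply measurable_to_countable'
    intro k
    have : Z ⁻¹' {k} = ⋃ n, (X ⁻¹' {n}) ∩ ((fun ω => ∑ i ∈ Finset.range n, Ys i ω) ⁻¹' {k}) := by
      ext ω
      simp only [Set.mem_preimage, Set.mem_singleton_iff, Set.mem_iUnion, Set.mem_inter_iff]
      constructor
      · intro h; exact ⟨X ω, rfl, h⟩
      · rintro ⟨n, rfl, h⟩; exact h
    rw [this]
    exact MeasurableSet.iUnion fun n =>
      (hX (measurableSet_singleton n)).inter
        ((Finset.measurable_sum _ fun i _ => hYs i) (measurableSet_singleton k))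
  -- independence of the Ys and of γ' ^ Ys i
  have hYsindep : iIndepFun Ys P :=
    aux_iIndepFun_comp_right hindep (Option.some_injective ℕ)
  have hgYindep : iIndepFun (fun i ω => γ' ^ Ys i ω) P :=
    hYsindep.comp (fun _ k => γ' ^ k) (fun _ => measurable_of_countable _)
  -- the common value of ∫ γ'^{Y_i}
  set m : ℝ≥0∞ := ∫⁻ ω, γ' ^ Y ω ∂P with hm
  have hm_i : ∀ i, ∫⁻ ω, γ' ^ Ys i ω ∂P = m := by
    intro i
    have h1 : ∫⁻ ω, γ' ^ Ys i ω ∂P = ∫⁻ k, γ' ^ k ∂(P.map (Ys i)) :=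
      (lintegral_map (measurable_of_countable _) (hYs i)).symm
    rw [h1, hmap i, lintegral_map (measurable_of_countable _) hY]
  -- Jensen: m ≤ α'
  have hmα : m ≤ α' := by
    have hpt : ∀ ω, γ' ^ Y ω = (β' ^ Y ω) ^ (θ:ℝ) := by
      intro ω
      rw [hβ', hγ', ← ENNReal.ofReal_pow hβ0.le, ← ENNReal.ofReal_pow hγ0.le,
        ENNReal.ofReal_rpow_of_pos (pow_pos hβ0 _)]
      congr 1
      rw [hγ, ← Real.rpow_natCast β (Y ω), ← Real.rpow_natCast (β ^ θ) (Y ω),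
        ← Real.rpow_mul hβ0.le, ← Real.rpow_mul hβ0.le, mul_comm]
    have hpq : (θ⁻¹).HolderConjugate (1 - θ)⁻¹ :=
      Real.HolderConjugate.inv_one_sub_inv hθ0 hθ1
    have hfmeas : AEMeasurable (fun ω => (β' ^ Y ω) ^ (θ:ℝ)) P :=
      ((measurable_of_countable fun k : ℕ => (β' ^ k) ^ (θ:ℝ)).comp hY).aemeasurable
    have hholder := ENNReal.lintegral_mul_le_Lp_mul_Lq P hpq hfmeas aemeasurable_const
      (g := fun _ => (1:ℝ≥0∞))
    simp only [Pi.mul_apply, mul_one, ENNReal.one_rpow, lintegral_const, measure_univ, mul_one] at hholder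
    have hsimp : ∀ ω, ((β' ^ Y ω) ^ (θ:ℝ)) ^ (θ⁻¹:ℝ) = β' ^ Y ω := by
      intro ω
      rw [← ENNReal.rpow_mul, mul_inv_cancel₀ hθ0.ne', ENNReal.rpow_one]
    rw [show (fun ω => ((β' ^ Y ω) ^ (θ:ℝ)) ^ (θ⁻¹:ℝ)) = fun ω => β' ^ Y ω from funext hsimp]
      at hholder
    calc m = ∫⁻ ω, (β' ^ Y ω) ^ (θ:ℝ) ∂P := by rw [hm]; congr 1; exact funext hpt
      _ ≤ (∫⁻ ω, β' ^ Y ω ∂P) ^ (1/(θ⁻¹:ℝ)) := hholder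
      _ = (∫⁻ ω, β' ^ Y ω ∂P) ^ (θ:ℝ) := by rw [one_div, inv_inv]
      _ ≤ (ENNReal.ofReal B) ^ (θ:ℝ) := ENNReal.rpow_le_rpow hβY hθ0.le
      _ = ENNReal.ofReal (B ^ θ) := ENNReal.ofReal_rpow_of_pos hB
      _ ≤ α' := ENNReal.ofReal_le_ofReal hBθ
  -- decomposition of ∫ α'^X over the level sets of X
  have hD1 : ∫⁻ ω, α' ^ X ω ∂P = ∑' n, α' ^ n * P (X ⁻¹' {n}) := by
    have hpt : ∀ ω, (∑' n, Set.indicator (X ⁻¹' {n}) (fun _ => α' ^ n) ω) = α' ^ X ω := by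
      intro ω
      rw [tsum_eq_single (X ω)]
      · simp [Set.indicator_apply]
      · intro n hn
        simp [Set.indicator_apply, Ne.symm hn]
    calc ∫⁻ ω, α' ^ X ω ∂P
        = ∫⁻ ω, ∑' n, Set.indicator (X ⁻¹' {n}) (fun _ => α' ^ n) ω ∂P := by
          congr 1; exact (funext hpt).symm
      _ = ∑' n, ∫⁻ ω, Set.indicator (X ⁻¹' {n}) (fun _ => α' ^ n) ω ∂P :=
          lintegral_tsum fun n =>
            (measurable_const.indicator (hX (measurableSet_singleton n))).aemeasurable
      _ = ∑' n, α' ^ n * P (X ⁻¹' {n}) := by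
          refine tsum_congr fun n => ?_
          rw [lintegral_indicator_const (hX (measurableSet_singleton n))]
  -- the products W n and their integrals
  set W : ℕ → Ω → ℝ≥0∞ := fun n ω => ∏ i ∈ Finset.range n, γ' ^ Ys i ω with hW
  have hWmeas : ∀ n, Measurable (W n) := fun n =>
    Finset.measurable_prod _ fun i _ => (measurable_of_countable fun k : ℕ => γ' ^ k).comp (hYs i)
  have hWint : ∀ n, ∫⁻ ω, W n ω ∂P = m ^ n := by
    intro n
    rw [hW]
    rw [aux_lintegral_prod hgYindep
      (fun i => (measurable_of_countable fun k : ℕ => γ' ^ k).comp (hYs i)) n]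
    rw [Finset.prod_congr rfl fun i _ => hm_i i, Finset.prod_const, Finset.card_range]
  -- each term of the decomposition of ∫ γ'^Z
  have hterm : ∀ n, ∫⁻ ω, Set.indicator (X ⁻¹' {n}) 1 ω * W n ω ∂P
      = P (X ⁻¹' {n}) * m ^ n := by
    intro n
    have hiXW := aux_indep_X_prod hX hYs hindep γ' n
    have hind := hiXW.comp (φ := Set.indicator ({n} : Set ℕ) (1 : ℕ → ℝ≥0∞))
      (measurable_of_countable _) (measurable_id : Measurable (id : ℝ≥0∞ → ℝ≥0∞))
    have he : (Set.indicator ({n} : Set ℕ) 1 ∘ X)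
        = fun ω => Set.indicator (X ⁻¹' {n}) (1 : Ω → ℝ≥0∞) ω := by
      funext ω
      simp [Set.indicator_apply, Pi.single_apply]
    rw [he, Function.id_comp] at hind
    have hmul := lintegral_mul_eq_lintegral_mul_lintegral_of_indepFun
      (measurable_one.indicator (hX (measurableSet_singleton n))) (hWmeas n) hind
    calc ∫⁻ ω, Set.indicator (X ⁻¹' {n}) 1 ω * W n ω ∂P
        = (∫⁻ ω, Set.indicator (X ⁻¹' {n}) 1 ω ∂P) * ∫⁻ ω, W n ω ∂P := hmul
      _ = P (X ⁻¹' {n}) * m ^ n := by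
          rw [lintegral_indicator_one (hX (measurableSet_singleton n)), hWint n]
  -- decomposition of ∫ γ'^Z
  have hD2 : ∫⁻ ω, γ' ^ Z ω ∂P = ∑' n, P (X ⁻¹' {n}) * m ^ n := by
    have hpt : ∀ ω, (∑' n, Set.indicator (X ⁻¹' {n}) 1 ω * W n ω) = γ' ^ Z ω := by
      intro ω
      rw [tsum_eq_single (X ω)]
      · have : Set.indicator (X ⁻¹' {X ω}) (1 : Ω → ℝ≥0∞) ω = 1 := by
          simp [Set.indicator_apply]
        rw [this, one_mul, hW, hZ]
        exact Finset.prod_pow_eq_pow_sum _ _ _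
      · intro n hn
        simp [Set.indicator_apply, Ne.symm hn]
    calc ∫⁻ ω, γ' ^ Z ω ∂P
        = ∫⁻ ω, ∑' n, Set.indicator (X ⁻¹' {n}) 1 ω * W n ω ∂P := by
          congr 1; exact (funext hpt).symm
      _ = ∑' n, ∫⁻ ω, Set.indicator (X ⁻¹' {n}) 1 ω * W n ω ∂P :=
          lintegral_tsum fun n =>
            ((measurable_one.indicator (hX (measurableSet_singleton n))).mul
              (hWmeas n)).aemeasurable
      _ = ∑' n, P (X ⁻¹' {n}) * m ^ n := tsum_congr hterm
  -- the exponential moment of Z is at most A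
  have hZmom : ∫⁻ ω, γ' ^ Z ω ∂P ≤ ENNReal.ofReal A := by
    rw [hD2]
    calc ∑' n, P (X ⁻¹' {n}) * m ^ n
        ≤ ∑' n, α' ^ n * P (X ⁻¹' {n}) := by
          refine ENNReal.tsum_le_tsum fun n => ?_
          calc P (X ⁻¹' {n}) * m ^ n
              ≤ P (X ⁻¹' {n}) * α' ^ n :=
                mul_le_mul_right (pow_le_pow_left₀ zero_le hmα n) _
            _ = α' ^ n * P (X ⁻¹' {n}) := mul_comm _ _
      _ = ∫⁻ ω, α' ^ X ω ∂P := hD1.symm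
      _ ≤ ENNReal.ofReal A := hαX
  -- Markov's inequality
  have hset : MeasurableSet {ω | s ≤ Z ω} := hZmeas (Set.to_countable _).measurableSet
  have hmarkov : γ' ^ s * P {ω | s ≤ Z ω} ≤ ∫⁻ ω, γ' ^ Z ω ∂P := by
    calc γ' ^ s * P {ω | s ≤ Z ω}
        = ∫⁻ ω, Set.indicator {ω | s ≤ Z ω} (fun _ => γ' ^ s) ω ∂P := by
          rw [lintegral_indicator_const hset]
      _ ≤ ∫⁻ ω, γ' ^ Z ω ∂P := by
          refine lintegral_mono fun ω => ?_
          by_cases hω : s ≤ Z ω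
          · simp only [Set.indicator_apply, Set.mem_setOf_eq, hω, if_true]
            exact pow_le_pow_right₀ hγ'1 hω
          · simp only [Set.indicator_apply, Set.mem_setOf_eq, hω, if_false]
            exact zero_le
  have hγ's0 : γ' ^ s ≠ 0 := pow_ne_zero _ (ENNReal.ofReal_pos.mpr hγ0).ne'
  have hγ'stop : γ' ^ s ≠ ⊤ := ENNReal.pow_ne_top ENNReal.ofReal_ne_top
  have hPbound : P {ω | s ≤ Z ω} ≤ ENNReal.ofReal A / γ' ^ s := by
    rw [ENNReal.le_div_iff_mul_le (Or.inl hγ's0) (Or.inl hγ'stop)]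
    rw [mul_comm]
    exact le_trans hmarkov hZmom
  have hfinal : ENNReal.ofReal (A * Real.exp (-Real.log γ * s))
      = ENNReal.ofReal A / γ' ^ s := by
    have h1 : A * Real.exp (-Real.log γ * s) = A / γ ^ s := by
      rw [neg_mul, Real.exp_neg, mul_comm (Real.log γ) (s:ℝ), Real.exp_nat_mul,
        Real.exp_log hγ0, div_eq_mul_inv]
    rw [h1, ENNReal.ofReal_div_of_pos (pow_pos hγ0 s), hγ', ← ENNReal.ofReal_pow hγ0.le]
  rw [hfinal]
  exact hPbound
end

section
/- Let β > 1, B > 0 and 0 ≤ μ < 1. There exist δ > 1 and D > 0, depending only on β, B and μ, with the following property. Let (Z_i)_{i ≥ 1} be independent identically distributed ℕ-valued random variables on a probability space (Ω, P) with E[Z_1] ≤ μ and E[β^{Z_1}] ≤ B. Define T(ω) = inf{ s ≥ 1 : ∑_{i=1}^{s} Z_i(ω) = s − 1 }, with the convention T(ω) = 0 if no such s exists; via the breadth-first exploration, T is the total size of the Galton–Watson branching process in which each node independently has offspring distributed as Z_1. Then E[δ^T] ≤ D. -/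
open MeasureTheory ProbabilityTheory

lemma aux_pow_interp (β t : ℝ) (hβ : 1 < β) (ht : 1 ≤ t) (htβ : t ≤ β) (z : ℕ) :
    t ^ z ≤ 1 + z * (t - 1) + ((t - 1) / (β - 1)) ^ 2 * (β ^ z - 1 - z * (β - 1)) := by
  have hβ1 : (0 : ℝ) < β - 1 := by linarith
  set c := ((t - 1) / (β - 1)) ^ 2 with hc
  have hc0 : 0 ≤ c := sq_nonneg _
  have hkey : c * (β - 1) ^ 2 = (t - 1) ^ 2 := by
    rw [hc, div_pow, div_mul_cancel₀ _ (pow_ne_zero 2 hβ1.ne')]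
  induction z with
  | zero => simp
  | succ z ih =>
    have hA : 0 ≤ β ^ z - 1 - z * (β - 1) := by
      have := one_add_mul_le_pow (by linarith : (-2:ℝ) ≤ β - 1) z
      simp only [add_sub_cancel] at this
      nlinarith [this]
    have ht0 : (0 : ℝ) < t := by linarith
    have h1 : t ^ (z + 1) ≤ t * (1 + z * (t - 1) + c * (β ^ z - 1 - z * (β - 1))) := by
      rw [pow_succ, mul_comm]
      exact mul_le_mul_of_nonneg_left ih (le_of_lt ht0)
    refine h1.trans ?_
    have hβz : β ^ (z + 1) = β * β ^ z := by ring
    push_cast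
    nlinarith [mul_nonneg (mul_nonneg hc0 (by linarith : (0:ℝ) ≤ β - t)) hA]

lemma aux_pow_le (β t : ℝ) (hβ : 1 < β) (ht : 1 ≤ t) (htβ : t ≤ β) (z : ℕ) :
    t ^ z ≤ 1 + z * (t - 1) + ((t - 1) / (β - 1)) ^ 2 * β ^ z := by
  have h := aux_pow_interp β t hβ ht htβ z
  have hc0 : (0:ℝ) ≤ ((t - 1) / (β - 1)) ^ 2 := sq_nonneg _
  have h2 : β ^ z - 1 - z * (β - 1) ≤ β ^ z := by
    have hz := mul_nonneg (Nat.cast_nonneg z : (0:ℝ) ≤ (z:ℝ)) (by linarith : (0:ℝ) ≤ β - 1)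
    linarith
  nlinarith [mul_le_mul_of_nonneg_left h2 hc0]

lemma gw_const_exists (β B μ : ℝ) (hβ : 1 < β) (hB : 0 < B) (hμ0 : 0 ≤ μ) (hμ1 : μ < 1) :
    ∃ t m q δ D : ℝ, 1 < t ∧ t ≤ β ∧
      1 + (t - 1) * μ + ((t - 1) / (β - 1)) ^ 2 * B ≤ m ∧ 1 ≤ m ∧
      0 < q ∧ q < 1 ∧ 1 < δ ∧ δ * m = t * q ∧ 0 < D ∧ 1 + t / (1 - q) ≤ D := by
  have hβ1 : (0:ℝ) < β - 1 := by linarith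
  set B' : ℝ := max B 1 with hB'
  have hB'1 : (1:ℝ) ≤ B' := le_max_right _ _
  have hB'0 : (0:ℝ) < B' := by linarith
  set ε : ℝ := min (β - 1) ((1 - μ) * (β - 1) ^ 2 / (2 * B')) with hε
  have hε0 : 0 < ε :=
    lt_min hβ1 (div_pos (mul_pos (by linarith) (by positivity)) (by positivity))
  have hεβ : ε ≤ β - 1 := min_le_left _ _
  have hcB : (ε / (β - 1)) ^ 2 * B ≤ (1 - μ) / 2 * ε := by
    have h1 : ε ≤ (1 - μ) * (β - 1) ^ 2 / (2 * B') := min_le_right _ _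
    have h1' : ε * (2 * B') ≤ (1 - μ) * (β - 1) ^ 2 := by
      rwa [← le_div_iff₀ (by positivity)]
    have h2 : (ε / (β - 1)) ^ 2 * B ≤ (ε / (β - 1)) ^ 2 * B' := by
      have : B ≤ B' := le_max_left _ _
      nlinarith [sq_nonneg (ε / (β - 1))]
    have h3 : (ε / (β - 1)) ^ 2 * B' = ε * (ε * B' / (β - 1) ^ 2) := by
      field_simp
    have h4 : ε * B' / (β - 1) ^ 2 ≤ (1 - μ) / 2 := by
      rw [div_le_div_iff₀ (by positivity) (by norm_num : (0:ℝ) < 2)]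
      nlinarith [h1']
    nlinarith [mul_le_mul_of_nonneg_left h4 (le_of_lt hε0)]
  refine ⟨1 + ε, 1 + (1 + μ) / 2 * ε, ?_⟩
  have hm1 : (1:ℝ) ≤ 1 + (1 + μ) / 2 * ε := by nlinarith
  have hmt : 1 + (1 + μ) / 2 * ε < 1 + ε := by nlinarith
  have hm0 : (0:ℝ) < 1 + (1 + μ) / 2 * ε := by linarith
  have ht0 : (0:ℝ) < 1 + ε := by linarith
  set m : ℝ := 1 + (1 + μ) / 2 * ε
  set t : ℝ := 1 + ε
  set ρ : ℝ := m / t with hρdef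
  have hρ0 : 0 < ρ := by positivity
  have hρ1 : ρ < 1 := (div_lt_one ht0).mpr hmt
  refine ⟨(1 + ρ) / 2, (1 + ρ) / (2 * ρ), 1 + t / (1 - (1 + ρ) / 2), ?_, ?_, ?_, ?_, ?_, ?_, ?_, ?_, ?_, ?_⟩
  · linarith [show t = 1 + ε from rfl]
  · linarith [show t = 1 + ε from rfl]
  · have h6 : (t - 1) = ε := by simp [t]
    rw [h6]
    linarith [hcB, show m = 1 + (1 + μ) / 2 * ε from rfl]
  · exact hm1
  · positivity
  · linarith
  · rw [lt_div_iff₀ (by positivity)]; nlinarith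
  · rw [hρdef]; field_simp
  · have h5 : 0 < t / (1 - (1 + ρ) / 2) := div_pos ht0 (by linarith)
    linarith
  · exact le_refl _

lemma gw_core (β B μ t m q δ D : ℝ) (hβ : 1 < β) (hB : 0 < B) (hμ0 : 0 ≤ μ)
    (ht1 : 1 < t) (htβ : t ≤ β)
    (hmoment : 1 + (t - 1) * μ + ((t - 1) / (β - 1)) ^ 2 * B ≤ m) (hm1 : 1 ≤ m)
    (hq0 : 0 < q) (hq1 : q < 1) (hδ1 : 1 < δ) (hδm : δ * m = t * q)
    (hD0 : 0 < D) (hD : 1 + t / (1 - q) ≤ D) :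
    ∀ (Ω : Type) (_ : MeasurableSpace Ω) (P : Measure Ω), IsProbabilityMeasure P →
      ∀ Z : ℕ → Ω → ℕ, (∀ i, Measurable (Z i)) →
        iIndepFun Z P →
        (∀ i, P.map (Z i) = P.map (Z 0)) →
        (∫⁻ ω, (Z 0 ω : ENNReal) ∂P) ≤ ENNReal.ofReal μ →
        (∫⁻ ω, (ENNReal.ofReal β) ^ Z 0 ω ∂P) ≤ ENNReal.ofReal B →
        (∫⁻ ω, (ENNReal.ofReal δ) ^
            sInf {s : ℕ | 1 ≤ s ∧ ∑ i ∈ Finset.range s, Z i ω = s - 1} ∂P)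
          ≤ ENNReal.ofReal D := by
  intro Ω mΩ P hP Z hZ hIndep hIdent hEZ hEβ
  have ht0 : (0:ℝ) < t := by linarith
  have hδ0 : (0:ℝ) < δ := by linarith
  set c : ℝ := ((t - 1) / (β - 1)) ^ 2 with hcdef
  have hc0 : (0:ℝ) ≤ c := sq_nonneg _
  -- pointwise bound
  have hptw : ∀ n : ℕ, (ENNReal.ofReal t) ^ n ≤
      1 + ENNReal.ofReal (t - 1) * n + ENNReal.ofReal c * (ENNReal.ofReal β) ^ n := by
    intro n
    have hrhs : (1 : ENNReal) + ENNReal.ofReal (t - 1) * n + ENNReal.ofReal c * (ENNReal.ofReal β) ^ n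
        = ENNReal.ofReal (1 + n * (t - 1) + c * β ^ n) := by
      rw [ENNReal.ofReal_add (by nlinarith [Nat.cast_nonneg (α := ℝ) n])
          (mul_nonneg hc0 (pow_nonneg (by linarith) n)),
        ENNReal.ofReal_add (by norm_num) (mul_nonneg (Nat.cast_nonneg n) (by linarith)), ENNReal.ofReal_one,
        ENNReal.ofReal_mul (by linarith), ENNReal.ofReal_mul hc0,
        ENNReal.ofReal_pow (by linarith : (0:ℝ) ≤ β), ENNReal.ofReal_natCast, mul_comm (ENNReal.ofReal (t-1))]
    rw [hrhs, ← ENNReal.ofReal_pow ht0.le]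
    exact ENNReal.ofReal_le_ofReal (aux_pow_le β t hβ ht1.le htβ n)
  have hg : Measurable (fun n : ℕ => (ENNReal.ofReal t) ^ n) := measurable_from_nat
  have hf : ∀ i, Measurable (fun ω => (ENNReal.ofReal t) ^ (Z i ω)) :=
    fun i => hg.comp (hZ i)
  -- moment bound
  have hmom : ∫⁻ ω, (ENNReal.ofReal t) ^ (Z 0 ω) ∂P ≤ ENNReal.ofReal m := by
    have hZ0E : Measurable (fun ω => ((Z 0 ω : ℕ) : ENNReal)) := measurable_from_nat.comp (hZ 0)
    have hZ0β : Measurable (fun ω => (ENNReal.ofReal β) ^ (Z 0 ω)) := measurable_from_nat.comp (hZ 0)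
    have hmeasA : Measurable (fun ω => ENNReal.ofReal (t - 1) * (Z 0 ω : ENNReal)) :=
      hZ0E.const_mul _
    have hmeasB : Measurable (fun ω => ENNReal.ofReal c * (ENNReal.ofReal β) ^ (Z 0 ω)) :=
      hZ0β.const_mul _
    calc ∫⁻ ω, (ENNReal.ofReal t) ^ (Z 0 ω) ∂P
        ≤ ∫⁻ ω, (1 + ENNReal.ofReal (t - 1) * (Z 0 ω) + ENNReal.ofReal c * (ENNReal.ofReal β) ^ (Z 0 ω)) ∂P :=
          lintegral_mono fun ω => hptw (Z 0 ω)
      _ = (∫⁻ ω, (1 + ENNReal.ofReal (t - 1) * (Z 0 ω)) ∂P) + ∫⁻ ω, ENNReal.ofReal c * (ENNReal.ofReal β) ^ (Z 0 ω) ∂P :=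
          lintegral_add_right _ hmeasB
      _ = (∫⁻ (_ : Ω), (1:ENNReal) ∂P) + (∫⁻ ω, ENNReal.ofReal (t - 1) * (Z 0 ω : ENNReal) ∂P) + ∫⁻ ω, ENNReal.ofReal c * (ENNReal.ofReal β) ^ (Z 0 ω) ∂P := by
          rw [lintegral_add_right _ hmeasA]
      _ = 1 + ENNReal.ofReal (t - 1) * (∫⁻ ω, (Z 0 ω : ENNReal) ∂P) + ENNReal.ofReal c * ∫⁻ ω, (ENNReal.ofReal β) ^ (Z 0 ω) ∂P := by
          rw [lintegral_one, measure_univ, lintegral_const_mul _ hZ0E,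
            lintegral_const_mul _ hZ0β]
      _ ≤ 1 + ENNReal.ofReal (t - 1) * ENNReal.ofReal μ + ENNReal.ofReal c * ENNReal.ofReal B := by
          gcongr
      _ = ENNReal.ofReal (1 + (t - 1) * μ + c * B) := by
          rw [ENNReal.ofReal_add (by nlinarith) (mul_nonneg hc0 hB.le),
            ENNReal.ofReal_add (by norm_num) (mul_nonneg (by linarith) hμ0), ENNReal.ofReal_one,
            ENNReal.ofReal_mul (by linarith), ENNReal.ofReal_mul hc0]
      _ ≤ ENNReal.ofReal m := ENNReal.ofReal_le_ofReal hmoment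
  -- identical distribution
  have hident' : ∀ i, ∫⁻ ω, (ENNReal.ofReal t) ^ (Z i ω) ∂P = ∫⁻ ω, (ENNReal.ofReal t) ^ (Z 0 ω) ∂P := by
    intro i
    have e1 : ∫⁻ ω, (ENNReal.ofReal t) ^ Z i ω ∂P = ∫⁻ n, (ENNReal.ofReal t) ^ n ∂(P.map (Z i)) :=
      (lintegral_map hg (hZ i)).symm
    have e2 : ∫⁻ n, (ENNReal.ofReal t) ^ n ∂(P.map (Z i)) = ∫⁻ n, (ENNReal.ofReal t) ^ n ∂(P.map (Z 0)) := by
      rw [hIdent i]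
    have e3 : ∫⁻ n, (ENNReal.ofReal t) ^ n ∂(P.map (Z 0)) = ∫⁻ ω, (ENNReal.ofReal t) ^ Z 0 ω ∂P :=
      lintegral_map hg (hZ 0)
    exact (e1.trans e2).trans e3
  -- independence product
  have hindep' : iIndepFun (fun i ω => (ENNReal.ofReal t) ^ (Z i ω)) P :=
    hIndep.comp (fun _ n => (ENNReal.ofReal t) ^ n) (fun _ => hg)
  have hprod : ∀ s : ℕ, ∫⁻ ω, ∏ i ∈ Finset.range s, (ENNReal.ofReal t) ^ (Z i ω) ∂P ≤ (ENNReal.ofReal m) ^ s := by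
    intro s; induction s with
    | zero => simp
    | succ s ih =>
      have hmul : ∫⁻ ω, ∏ i ∈ Finset.range (s+1), (ENNReal.ofReal t) ^ (Z i ω) ∂P
          = (∫⁻ ω, ∏ i ∈ Finset.range s, (ENNReal.ofReal t) ^ (Z i ω) ∂P)
            * ∫⁻ ω, (ENNReal.ofReal t) ^ (Z s ω) ∂P := by
        simp_rw [Finset.prod_range_succ]
        have hind2 : IndepFun (∏ j ∈ Finset.range s, fun ω => (ENNReal.ofReal t) ^ (Z j ω))
            (fun ω => (ENNReal.ofReal t) ^ (Z s ω)) P :=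
          hindep'.indepFun_prod_range_succ (fun i => hf i) s
        have heq : (∏ j ∈ Finset.range s, fun ω => (ENNReal.ofReal t) ^ (Z j ω))
            = fun ω => ∏ j ∈ Finset.range s, (ENNReal.ofReal t) ^ (Z j ω) := by
          funext ω; simp [Finset.prod_apply]
        rw [heq] at hind2
        exact lintegral_mul_eq_lintegral_mul_lintegral_of_indepFun''
          ((Finset.measurable_prod _ (fun i _ => hf i)).aemeasurable) ((hf s).aemeasurable) hind2
      rw [hmul, hident' s, pow_succ]
      exact mul_le_mul' ih hmom
  -- events
  set A : ℕ → Set Ω := fun k => {ω | ∑ i ∈ Finset.range (k+1), Z i ω = k} with hAdef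
  have hsummeas : ∀ k : ℕ, Measurable (fun ω => ∑ i ∈ Finset.range (k+1), Z i ω) :=
    fun k => Finset.measurable_sum _ (fun i _ => hZ i)
  have hA : ∀ k, MeasurableSet (A k) := fun k =>
    (hsummeas k) (measurableSet_singleton k)
  -- Markov
  have hmarkov : ∀ k : ℕ, (ENNReal.ofReal t) ^ k * P (A k) ≤ (ENNReal.ofReal m) ^ (k+1) := by
    intro k
    have h1 : (ENNReal.ofReal t) ^ k * P (A k)
        = ∫⁻ ω in A k, (ENNReal.ofReal t) ^ (∑ i ∈ Finset.range (k+1), Z i ω) ∂P := by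
      rw [← setLIntegral_const (A k) ((ENNReal.ofReal t) ^ k)]
      refine setLIntegral_congr_fun (hA k) (fun ω hω => ?_)
      have : ∑ i ∈ Finset.range (k+1), Z i ω = k := hω
      simp only [this]
    have h2 : ∫⁻ ω in A k, (ENNReal.ofReal t) ^ (∑ i ∈ Finset.range (k+1), Z i ω) ∂P
        ≤ ∫⁻ ω, (ENNReal.ofReal t) ^ (∑ i ∈ Finset.range (k+1), Z i ω) ∂P :=
      setLIntegral_le_lintegral _ _
    have h3 : ∫⁻ ω, (ENNReal.ofReal t) ^ (∑ i ∈ Finset.range (k+1), Z i ω) ∂P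
        = ∫⁻ ω, ∏ i ∈ Finset.range (k+1), (ENNReal.ofReal t) ^ (Z i ω) ∂P := by
      congr 1; funext ω; rw [Finset.prod_pow_eq_pow_sum]
    rw [h1]
    exact h2.trans (h3.le.trans (hprod (k+1)))
  -- per-term bound
  have hterm : ∀ k : ℕ, (ENNReal.ofReal δ) ^ (k+1) * P (A k)
      ≤ ENNReal.ofReal t * (ENNReal.ofReal q) ^ (k+1) := by
    intro k
    have hτ0 : (ENNReal.ofReal t) ^ k ≠ 0 := pow_ne_zero _ (by simp [ENNReal.ofReal_pos.mpr ht0] ; positivity)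
    have hτtop : (ENNReal.ofReal t) ^ k ≠ ⊤ := ENNReal.pow_ne_top ENNReal.ofReal_ne_top
    rw [← ENNReal.mul_le_mul_iff_right hτ0 hτtop]
    calc (ENNReal.ofReal t) ^ k * ((ENNReal.ofReal δ) ^ (k+1) * P (A k))
        = (ENNReal.ofReal δ) ^ (k+1) * ((ENNReal.ofReal t) ^ k * P (A k)) := by ring
      _ ≤ (ENNReal.ofReal δ) ^ (k+1) * (ENNReal.ofReal m) ^ (k+1) :=
          mul_le_mul_right (hmarkov k) _
      _ = (ENNReal.ofReal δ * ENNReal.ofReal m) ^ (k+1) := (mul_pow _ _ _).symm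
      _ = (ENNReal.ofReal t * ENNReal.ofReal q) ^ (k+1) := by
          rw [← ENNReal.ofReal_mul hδ0.le, hδm, ENNReal.ofReal_mul ht0.le]
      _ = (ENNReal.ofReal t) ^ (k+1) * (ENNReal.ofReal q) ^ (k+1) := mul_pow _ _ _
      _ = (ENNReal.ofReal t) ^ k * (ENNReal.ofReal t * (ENNReal.ofReal q) ^ (k+1)) := by ring
  -- pointwise tail bound
  have hpt : ∀ ω : Ω, (ENNReal.ofReal δ) ^
      sInf {s : ℕ | 1 ≤ s ∧ ∑ i ∈ Finset.range s, Z i ω = s - 1}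
      ≤ 1 + ∑' k : ℕ, (A k).indicator (fun _ => (ENNReal.ofReal δ) ^ (k+1)) ω := by
    intro ω
    set S : Set ℕ := {s : ℕ | 1 ≤ s ∧ ∑ i ∈ Finset.range s, Z i ω = s - 1} with hSdef
    by_cases hS : S.Nonempty
    · obtain ⟨h1, h2⟩ := Nat.sInf_mem hS
      obtain ⟨k, hk⟩ : ∃ k, sInf S = k + 1 := ⟨sInf S - 1, (Nat.succ_pred_eq_of_pos h1).symm⟩
      have hωA : ω ∈ A k := by
        show ∑ i ∈ Finset.range (k+1), Z i ω = k
        rw [hk] at h2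
        simpa using h2
      calc (ENNReal.ofReal δ) ^ sInf S
          = (A k).indicator (fun _ => (ENNReal.ofReal δ) ^ (k+1)) ω := by
            rw [Set.indicator_of_mem hωA, hk]
        _ ≤ ∑' k : ℕ, (A k).indicator (fun _ => (ENNReal.ofReal δ) ^ (k+1)) ω :=
            ENNReal.le_tsum k
        _ ≤ 1 + ∑' k : ℕ, (A k).indicator (fun _ => (ENNReal.ofReal δ) ^ (k+1)) ω := le_add_self
    · rw [Set.not_nonempty_iff_eq_empty.mp hS]
      simp [Nat.sInf_empty]
  -- integrate
  have hq' : ENNReal.ofReal q ≤ 1 := by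
    rw [← ENNReal.ofReal_one]; exact ENNReal.ofReal_le_ofReal hq1.le
  calc ∫⁻ ω, (ENNReal.ofReal δ) ^
        sInf {s : ℕ | 1 ≤ s ∧ ∑ i ∈ Finset.range s, Z i ω = s - 1} ∂P
      ≤ ∫⁻ ω, (1 + ∑' k : ℕ, (A k).indicator (fun _ => (ENNReal.ofReal δ) ^ (k+1)) ω) ∂P :=
        lintegral_mono hpt
    _ = 1 + ∑' k : ℕ, (ENNReal.ofReal δ) ^ (k+1) * P (A k) := by
        rw [lintegral_add_left measurable_const, lintegral_one, measure_univ,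
          lintegral_tsum (fun k => (measurable_const.indicator (hA k)).aemeasurable)]
        congr 1
        exact tsum_congr fun k => lintegral_indicator_const (hA k) _
    _ ≤ 1 + ∑' k : ℕ, ENNReal.ofReal t * (ENNReal.ofReal q) ^ (k+1) :=
        add_le_add_right (ENNReal.tsum_le_tsum hterm) _
    _ = 1 + ENNReal.ofReal t * (ENNReal.ofReal q * (1 - ENNReal.ofReal q)⁻¹) := by
        rw [ENNReal.tsum_mul_left, ENNReal.tsum_geometric_add_one]
    _ ≤ 1 + ENNReal.ofReal t * (1 - ENNReal.ofReal q)⁻¹ := by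
        gcongr
        exact mul_le_of_le_one_left' hq'
    _ = 1 + ENNReal.ofReal (t / (1 - q)) := by
        have hsub : (1:ENNReal) - ENNReal.ofReal q = ENNReal.ofReal (1 - q) := by
          rw [ENNReal.ofReal_sub 1 hq0.le, ENNReal.ofReal_one]
        rw [hsub, ← ENNReal.ofReal_inv_of_pos (by linarith : (0:ℝ) < 1 - q),
          ← ENNReal.ofReal_mul ht0.le, ← div_eq_mul_inv]
    _ ≤ ENNReal.ofReal D := by
        rw [show (1:ENNReal) + ENNReal.ofReal (t / (1 - q)) = ENNReal.ofReal (1 + t / (1 - q)) by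
          rw [ENNReal.ofReal_add (by norm_num) (le_of_lt (div_pos ht0 (by linarith))),
            ENNReal.ofReal_one]]
        exact ENNReal.ofReal_le_ofReal hD

/-- **Subcritical Galton–Watson processes have exponential tails.**
If the offspring distribution `Z` satisfies `E[Z] ≤ μ < 1` and `E[β^Z] ≤ B` for some
`β > 1`, then the total size `T` of the Galton–Watson branching process in which each
node independently has `Z` children (realized, via the breadth-first exploration, as the
first time `s ≥ 1` with `∑_{i<s} Z_i = s - 1`, and `0` if there is no such time)
satisfies `E[δ^T] ≤ D` for some `δ > 1` and `D > 0` depending only on `β, B, μ`. -/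
theorem subcritical_gw_total_size_tail (β B μ : ℝ) (hβ : 1 < β) (hB : 0 < B)
    (hμ0 : 0 ≤ μ) (hμ1 : μ < 1) :
    ∃ δ : ℝ, 1 < δ ∧ ∃ D : ℝ, 0 < D ∧
      ∀ (Ω : Type) (_ : MeasurableSpace Ω) (P : Measure Ω), IsProbabilityMeasure P →
        ∀ Z : ℕ → Ω → ℕ, (∀ i, Measurable (Z i)) →
          iIndepFun Z P →
          (∀ i, P.map (Z i) = P.map (Z 0)) →
          (∫⁻ ω, (Z 0 ω : ENNReal) ∂P) ≤ ENNReal.ofReal μ →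
          (∫⁻ ω, (ENNReal.ofReal β) ^ Z 0 ω ∂P) ≤ ENNReal.ofReal B →
          (∫⁻ ω, (ENNReal.ofReal δ) ^
              sInf {s : ℕ | 1 ≤ s ∧ ∑ i ∈ Finset.range s, Z i ω = s - 1} ∂P)
            ≤ ENNReal.ofReal D := by
  obtain ⟨t, m, q, δ, D, ht1, htβ, hmom, hm1, hq0, hq1, hδ1, hδm, hD0, hD⟩ :=
    gw_const_exists β B μ hβ hB hμ0 hμ1
  exact ⟨δ, hδ1, D, hD0,
    gw_core β B μ t m q δ D hβ hB hμ0 ht1 htβ hmom hm1 hq0 hq1 hδ1 hδm hD0 hD⟩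
end

section
/- For all β > 1, B > 0 and 0 ≤ μ < 1 there exist x > 0 and 0 < c < 1, depending only on β, B and μ, such that every ℕ-valued random variable Z (on any probability space) with E[Z] ≤ μ and E[β^Z] ≤ B satisfies E[e^{x(Z−1)}] ≤ c. -/
open MeasureTheory ProbabilityTheory

set_option maxHeartbeats 1000000

/-- For all `β > 1`, `B > 0` and `0 ≤ μ < 1` there exist `x > 0` and `0 < c < 1`,
depending only on `β, B, μ`, such that every `ℕ`-valued random variable `Z` with
`E[Z] ≤ μ` and `E[β^Z] ≤ B` satisfies `E[e^{x(Z-1)}] ≤ c`. -/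
theorem exp_moment_bound (β B μ : ℝ) (hβ : 1 < β) (hB : 0 < B)
    (hμ0 : 0 ≤ μ) (hμ1 : μ < 1) :
    ∃ x : ℝ, 0 < x ∧ ∃ c : ℝ, 0 < c ∧ c < 1 ∧
      ∀ (Ω : Type) (_ : MeasurableSpace Ω) (P : Measure Ω), IsProbabilityMeasure P →
        ∀ Z : Ω → ℕ, Measurable Z →
          (∫⁻ ω, (Z ω : ENNReal) ∂P) ≤ ENNReal.ofReal μ →
          (∫⁻ ω, (ENNReal.ofReal β) ^ Z ω ∂P) ≤ ENNReal.ofReal B →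
          (∫⁻ ω, ENNReal.ofReal (Real.exp (x * ((Z ω : ℝ) - 1))) ∂P)
            ≤ ENNReal.ofReal c := by
  obtain ⟨L, hL, hLdef⟩ : ∃ L : ℝ, 0 < L ∧ L = Real.log β :=
    ⟨Real.log β, Real.log_pos hβ, rfl⟩
  have hβ0 : (0:ℝ) < β := lt_trans one_pos hβ
  obtain ⟨D, hD1, hDL⟩ : ∃ D : ℝ, 1 ≤ D ∧ 216 / L^3 ≤ D :=
    ⟨max 1 (216 / L^3), le_max_left _ _, le_max_right _ _⟩
  have hD0 : (0:ℝ) < D := lt_of_lt_of_le one_pos hD1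
  obtain ⟨x, hx0, hxhalf, hxL, hxB⟩ :
      ∃ x : ℝ, 0 < x ∧ x ≤ 1/2 ∧ x ≤ L/2 ∧ x ≤ (1-μ)/(2*D*B) := by
    refine ⟨min (1/2) (min (L/2) ((1-μ)/(2*D*B))), ?_, min_le_left _ _,
      le_trans (min_le_right _ _) (min_le_left _ _),
      le_trans (min_le_right _ _) (min_le_right _ _)⟩
    exact lt_min (by norm_num) (lt_min (by linarith)
      (div_pos (by linarith) (by positivity)))
  refine ⟨x, hx0, 1 - x*(1-μ)/2, by nlinarith, by nlinarith, ?_⟩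
  intro Ω mΩ P hP Z hZ hZmean hZbeta
  -- key real pointwise inequality
  have hpt : ∀ n : ℕ, Real.exp (x * ((n:ℝ) - 1)) ≤ (1-x) + x*(n:ℝ) + (D*x^2)*β^n := by
    intro n
    rcases Nat.eq_zero_or_pos n with hn | hn
    · subst hn
      simp only [Nat.cast_zero, pow_zero, mul_one]
      have hxe : x * ((0:ℝ) - 1) = -x := by ring
      rw [hxe]
      have h1 : (1 + x) * Real.exp (-x) ≤ 1 := by
        have h2 : 1 + x ≤ Real.exp x := by have := Real.add_one_le_exp x; linarith
        calc (1 + x) * Real.exp (-x) ≤ Real.exp x * Real.exp (-x) :=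
              mul_le_mul_of_nonneg_right h2 (Real.exp_pos _).le
          _ = 1 := by rw [← Real.exp_add]; simp
      have hE : Real.exp (-x) ≤ 1 - x + x^2 := by
        nlinarith [Real.exp_pos (-x), hx0.le]
      nlinarith [sq_nonneg x]
    · have hn1 : (1:ℝ) ≤ (n:ℝ) := by exact_mod_cast hn
      set u : ℝ := x * ((n:ℝ) - 1) with hudef
      have hu : 0 ≤ u := mul_nonneg hx0.le (by linarith)
      have hA : (1 - u) * Real.exp u ≤ 1 := by
        have h1 : 1 - u ≤ Real.exp (-u) := by
          have := Real.add_one_le_exp (-u); linarith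
        calc (1 - u) * Real.exp u ≤ Real.exp (-u) * Real.exp u :=
              mul_le_mul_of_nonneg_right h1 (Real.exp_pos u).le
          _ = 1 := by rw [← Real.exp_add]; simp
      have htaylor : Real.exp u ≤ 1 + u + u^2 * Real.exp u := by
        nlinarith [mul_le_mul_of_nonneg_left hA (by linarith : (0:ℝ) ≤ 1 + u),
          Real.exp_pos u]
      -- β^n = exp (n * L)
      have hβn : β^n = Real.exp ((n:ℝ) * L) := by
        rw [hLdef, Real.exp_nat_mul, Real.exp_log hβ0]
      -- exp u ≤ exp (n*L/2)
      have hexpu : Real.exp u ≤ Real.exp ((n:ℝ)*L/2) := by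
        apply Real.exp_le_exp.mpr
        have : u ≤ (L/2) * ((n:ℝ) - 1) :=
          mul_le_mul_of_nonneg_right hxL (by linarith)
        nlinarith
      -- n^3 ≤ D * exp(n*L/2)
      have hcube : ((n:ℝ))^3 ≤ D * Real.exp ((n:ℝ)*L/2) := by
        have h1 : ((n:ℝ)*L/2)/3 ≤ Real.exp (((n:ℝ)*L/2)/3) := by
          have := Real.add_one_le_exp (((n:ℝ)*L/2)/3)
          have hs : 0 ≤ (n:ℝ)*L/2 := by positivity
          linarith
        have h2 : (((n:ℝ)*L/2)/3)^3 ≤ (Real.exp (((n:ℝ)*L/2)/3))^3 :=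
          pow_le_pow_left₀ (by positivity) h1 3
        have h3 : (Real.exp (((n:ℝ)*L/2)/3))^3 = Real.exp ((n:ℝ)*L/2) := by
          rw [← Real.exp_nat_mul]
          congr 1
          push_cast; ring
        rw [h3] at h2
        have h4 : ((n:ℝ))^3 * L^3 / 216 ≤ Real.exp ((n:ℝ)*L/2) := by
          have he : (((n:ℝ)*L/2)/3)^3 = ((n:ℝ))^3 * L^3 / 216 := by ring
          linarith [he ▸ h2]
        have h6 : (216 / L^3) * (((n:ℝ))^3 * L^3 / 216) ≤ (216 / L^3) * Real.exp ((n:ℝ)*L/2) :=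
          mul_le_mul_of_nonneg_left h4 (by positivity)
        have h5 : (216 / L^3) * (((n:ℝ))^3 * L^3 / 216) = ((n:ℝ))^3 := by
          field_simp
        rw [h5] at h6
        exact le_trans h6 (mul_le_mul_of_nonneg_right hDL (Real.exp_pos _).le)
      -- (n-1)^2 * exp u ≤ D * β^n
      have hkey : ((n:ℝ) - 1)^2 * Real.exp u ≤ D * β^n := by
        have h1 : ((n:ℝ) - 1)^2 * Real.exp u ≤ (n:ℝ)^3 * Real.exp ((n:ℝ)*L/2) := by
          have e1 : ((n:ℝ)-1)^2 ≤ (n:ℝ)^3 := by nlinarith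
          have := mul_le_mul e1 hexpu (Real.exp_pos u).le (by positivity)
          linarith
        have h2 : (n:ℝ)^3 * Real.exp ((n:ℝ)*L/2) ≤ D * Real.exp ((n:ℝ)*L/2) * Real.exp ((n:ℝ)*L/2) :=
          mul_le_mul_of_nonneg_right hcube (Real.exp_pos _).le
        have h3 : D * Real.exp ((n:ℝ)*L/2) * Real.exp ((n:ℝ)*L/2) = D * β^n := by
          rw [hβn, mul_assoc, ← Real.exp_add]
          congr 2
          ring
        linarith
      have hstep : Real.exp u ≤ 1 + u + x^2 * (((n:ℝ)-1)^2 * Real.exp u) := by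
        have he : u^2 * Real.exp u = x^2 * (((n:ℝ)-1)^2 * Real.exp u) := by
          rw [hudef]; ring
        linarith [he ▸ htaylor]
      calc Real.exp u ≤ 1 + u + x^2 * (((n:ℝ)-1)^2 * Real.exp u) := hstep
        _ ≤ 1 + u + x^2 * (D * β^n) := by
            have := mul_le_mul_of_nonneg_left hkey (sq_nonneg x)
            linarith
        _ = (1-x) + x*(n:ℝ) + (D*x^2)*β^n := by rw [hudef]; ring
  -- ENNReal pointwise
  have hZE : Measurable fun ω => (Z ω : ENNReal) := measurable_from_nat.comp hZ
  have hβZ : Measurable fun ω => (ENNReal.ofReal β) ^ (Z ω) := measurable_from_nat.comp hZ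
  have hptE : ∀ ω, ENNReal.ofReal (Real.exp (x * ((Z ω : ℝ) - 1))) ≤
      ENNReal.ofReal (1-x) + ENNReal.ofReal x * (Z ω : ENNReal)
        + ENNReal.ofReal (D*x^2) * (ENNReal.ofReal β) ^ (Z ω) := by
    intro ω
    calc ENNReal.ofReal (Real.exp (x * ((Z ω : ℝ) - 1)))
        ≤ ENNReal.ofReal ((1-x) + x*(Z ω:ℝ) + (D*x^2)*β^(Z ω)) :=
          ENNReal.ofReal_le_ofReal (hpt (Z ω))
      _ ≤ ENNReal.ofReal ((1-x) + x*(Z ω:ℝ)) + ENNReal.ofReal ((D*x^2)*β^(Z ω)) :=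
          ENNReal.ofReal_add_le
      _ ≤ (ENNReal.ofReal (1-x) + ENNReal.ofReal (x*(Z ω:ℝ)))
            + ENNReal.ofReal ((D*x^2)*β^(Z ω)) := by
          gcongr; exact ENNReal.ofReal_add_le
      _ = ENNReal.ofReal (1-x) + ENNReal.ofReal x * (Z ω : ENNReal)
            + ENNReal.ofReal (D*x^2) * (ENNReal.ofReal β) ^ (Z ω) := by
          rw [ENNReal.ofReal_mul hx0.le, ENNReal.ofReal_mul (by positivity),
            ENNReal.ofReal_natCast, ENNReal.ofReal_pow hβ0.le]
  -- integrate
  have hint : (∫⁻ ω, ENNReal.ofReal (Real.exp (x * ((Z ω : ℝ) - 1))) ∂P)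
      ≤ ENNReal.ofReal (1-x) + ENNReal.ofReal x * ENNReal.ofReal μ
        + ENNReal.ofReal (D*x^2) * ENNReal.ofReal B := by
    calc (∫⁻ ω, ENNReal.ofReal (Real.exp (x * ((Z ω : ℝ) - 1))) ∂P)
        ≤ ∫⁻ ω, (ENNReal.ofReal (1-x) + ENNReal.ofReal x * (Z ω : ENNReal)
            + ENNReal.ofReal (D*x^2) * (ENNReal.ofReal β) ^ (Z ω)) ∂P :=
          lintegral_mono hptE
      _ = ENNReal.ofReal (1-x) + ENNReal.ofReal x * (∫⁻ ω, (Z ω : ENNReal) ∂P)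
            + ENNReal.ofReal (D*x^2) * (∫⁻ ω, (ENNReal.ofReal β) ^ (Z ω) ∂P) := by
          rw [lintegral_add_right _ (hβZ.const_mul _),
            lintegral_add_right _ (hZE.const_mul _),
            lintegral_const, measure_univ, mul_one,
            lintegral_const_mul _ hZE, lintegral_const_mul _ hβZ]
      _ ≤ ENNReal.ofReal (1-x) + ENNReal.ofReal x * ENNReal.ofReal μ
            + ENNReal.ofReal (D*x^2) * ENNReal.ofReal B := by
          gcongr
  refine le_trans hint ?_
  rw [← ENNReal.ofReal_mul hx0.le, ← ENNReal.ofReal_mul (by positivity),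
    ← ENNReal.ofReal_add (by linarith) (by positivity),
    ← ENNReal.ofReal_add (by nlinarith) (by positivity)]
  apply ENNReal.ofReal_le_ofReal
  -- (1-x) + x*μ + D*x^2*B ≤ 1 - x*(1-μ)/2
  have hxDB : x * (D * B) ≤ (1-μ)/2 := by
    have h := mul_le_mul_of_nonneg_right hxB (by positivity : (0:ℝ) ≤ 2*D*B)
    have h2 : (1-μ)/(2*D*B) * (2*D*B) = 1 - μ := by field_simp
    rw [h2] at h
    nlinarith
  nlinarith [mul_le_mul_of_nonneg_left hxDB hx0.le]
end

section
/- Let ℓ ≥ 1, let G and G' be simple graphs on the same finite vertex set V with every edge of G an edge of G', and suppose there is a set W ⊆ V with |W| ≤ ℓ such that every edge of G' that is not an edge of G has both endpoints in W. Then for every k ≥ 1, |N_k(G') − N_k(G)| ≤ ℓ·k. (In one step of an ℓ-vertex process, at most ℓ components are destroyed and at most ℓ are created, so N_k changes by at most ℓk.) -/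
/-- The number of vertices in the connected component of `v` in `G`. -/
noncomputable def compSize {V : Type*} [Fintype V] (G : SimpleGraph V) (v : V) : ℕ :=
  Set.ncard {w | G.Reachable v w}

/-- The number of vertices of `G` lying in components with exactly `k` vertices. -/
noncomputable def numInCompOfSize {V : Type*} [Fintype V] (G : SimpleGraph V) (k : ℕ) : ℕ :=
  Set.ncard {v | compSize G v = k}

lemma compSize_eq_of_reachable {V : Type*} [Fintype V] (H : SimpleGraph V) {v w : V}
    (h : H.Reachable v w) : compSize H v = compSize H w := by
  unfold compSize
  congr 1
  ext x
  exact ⟨fun hx => h.symm.trans hx, fun hx => h.trans hx⟩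

/-- number of vertices in components of size k meeting W is at most |W| * k -/
lemma aux2 {V : Type*} [Fintype V] (H : SimpleGraph V) (k : ℕ) (W : Set V) :
    ({v | compSize H v = k ∧ ∃ w ∈ W, H.Reachable v w}).ncard ≤ W.ncard * k := by
  classical
  set T : V → Set V := fun w => {v | H.Reachable w v ∧ compSize H v = k} with hT
  have hTk : ∀ w : V, (T w).ncard ≤ k := by
    intro w
    rcases Set.eq_empty_or_nonempty (T w) with he | ⟨v₀, hv₀⟩
    · simp [he]
    · have hcw : compSize H w = k := by
        rw [compSize_eq_of_reachable H hv₀.1]; exact hv₀.2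
      have : T w ⊆ {x | H.Reachable w x} := fun x hx => hx.1
      calc (T w).ncard ≤ ({x | H.Reachable w x}).ncard :=
            Set.ncard_le_ncard this (Set.toFinite _)
        _ = k := hcw
  set Wfin := W.toFinite.toFinset with hWfin
  set U := Wfin.biUnion (fun w => (T w).toFinite.toFinset) with hU
  have hsub : {v | compSize H v = k ∧ ∃ w ∈ W, H.Reachable v w} ⊆ ↑U := by
    intro v ⟨hk, w, hwW, hr⟩
    simp only [hU, Finset.coe_biUnion, Set.mem_iUnion, Finset.mem_coe,
      Set.Finite.mem_toFinset, hWfin]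
    exact ⟨w, hwW, hr.symm, hk⟩
  calc ({v | compSize H v = k ∧ ∃ w ∈ W, H.Reachable v w}).ncard
      ≤ (↑U : Set V).ncard := Set.ncard_le_ncard hsub (Set.toFinite _)
    _ = U.card := Set.ncard_coe_finset U
    _ ≤ ∑ w ∈ Wfin, ((T w).toFinite.toFinset).card := Finset.card_biUnion_le
    _ ≤ ∑ w ∈ Wfin, k := by
        apply Finset.sum_le_sum
        intro w _
        rw [← Set.ncard_eq_toFinset_card _ (Set.toFinite (T w))]
        exact hTk w
    _ = Wfin.card * k := by rw [Finset.sum_const, smul_eq_mul]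
    _ = W.ncard * k := by rw [hWfin, ← Set.ncard_eq_toFinset_card _ W.toFinite]

/-- If `G'` is obtained from `G` by adding edges all of whose endpoints lie in a set `W`
of at most `ℓ` vertices, then for every `k ≥ 1` the quantity `N_k` changes by at most
`ℓ·k`: at most `ℓ` components are destroyed and at most `ℓ` are created. -/
theorem Nk_change_le (V : Type*) [Fintype V] (ℓ : ℕ) (hℓ : 1 ≤ ℓ)
    (G G' : SimpleGraph V) (h : G ≤ G') (W : Set V) (hW : W.ncard ≤ ℓ)
    (hedges : ∀ a b : V, G'.Adj a b → ¬ G.Adj a b → a ∈ W ∧ b ∈ W) :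
    ∀ k : ℕ, 1 ≤ k →
      |(numInCompOfSize G' k : ℤ) - (numInCompOfSize G k : ℤ)| ≤ ℓ * k := by
  classical
  intro k hk
  -- vertices whose G-component meets W
  set X : Set V := {v | ∃ w ∈ W, G.Reachable v w} with hX
  -- off X, compSizes agree
  have key : ∀ v, v ∉ X → compSize G' v = compSize G v := by
    intro v hvX
    have hno : ∀ u, G.Reachable v u → u ∉ W := by
      intro u hu huW
      exact hvX ⟨u, huW, hu⟩
    unfold compSize
    congr 1
    ext x
    simp only [Set.mem_setOf_eq]
    constructor
    · intro hr
      obtain ⟨p⟩ := hr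
      clear hvX
      induction p with
      | nil => exact SimpleGraph.Reachable.refl _
      | @cons a b c hab p ih =>
        have hGab : G.Adj a b := by
          by_contra hn
          exact hno a (SimpleGraph.Reachable.refl _) (hedges a b hab hn).1
        have hrab : G.Reachable a b := hGab.reachable
        have := ih (fun u hu => hno u (hrab.trans hu))
        exact hrab.trans this
    · intro hr
      exact hr.mono h
  -- decompose
  set A := {v | compSize G v = k} with hA
  set A' := {v | compSize G' v = k} with hA'
  have hsplit : ∀ (S : Set V), S.ncard = (S ∩ X).ncard + (S \ X).ncard := by
    intro S
    rw [← Set.ncard_union_eq (Set.disjoint_of_subset_left (Set.inter_subset_right)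
      Set.disjoint_sdiff_right) (Set.toFinite _) (Set.toFinite _),
      Set.inter_union_diff]
  have hdiff : A' \ X = A \ X := by
    ext v
    simp only [Set.mem_diff, hA, hA', Set.mem_setOf_eq]
    constructor
    · rintro ⟨hv, hvX⟩; exact ⟨by rw [← key v hvX]; exact hv, hvX⟩
    · rintro ⟨hv, hvX⟩; exact ⟨by rw [key v hvX]; exact hv, hvX⟩
  have hboundG : (A ∩ X).ncard ≤ ℓ * k := by
    have hs : A ∩ X ⊆ {v | compSize G v = k ∧ ∃ w ∈ W, G.Reachable v w} := by
      intro v ⟨hv, hvX⟩; exact ⟨hv, hvX⟩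
    calc (A ∩ X).ncard ≤ _ := Set.ncard_le_ncard hs (Set.toFinite _)
      _ ≤ W.ncard * k := aux2 G k W
      _ ≤ ℓ * k := Nat.mul_le_mul_right k hW
  have hboundG' : (A' ∩ X).ncard ≤ ℓ * k := by
    have hs : A' ∩ X ⊆ {v | compSize G' v = k ∧ ∃ w ∈ W, G'.Reachable v w} := by
      rintro v ⟨hv, w, hwW, hr⟩
      exact ⟨hv, w, hwW, hr.mono h⟩
    calc (A' ∩ X).ncard ≤ _ := Set.ncard_le_ncard hs (Set.toFinite _)
      _ ≤ W.ncard * k := aux2 G' k W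
      _ ≤ ℓ * k := Nat.mul_le_mul_right k hW
  have e1 : numInCompOfSize G' k = (A' ∩ X).ncard + (A \ X).ncard := by
    rw [numInCompOfSize, ← hA', hsplit A', hdiff]
  have e2 : numInCompOfSize G k = (A ∩ X).ncard + (A \ X).ncard := by
    rw [numInCompOfSize, ← hA, hsplit A]
  rw [e1, e2]
  rw [abs_sub_le_iff]
  push_cast
  constructor <;> [skip; skip] <;>
    · have h1 := hboundG'; have h2 := hboundG
      have : ((A' ∩ X).ncard : ℤ) ≤ (ℓ : ℤ) * k := by exact_mod_cast h1
      have : ((A ∩ X).ncard : ℤ) ≤ (ℓ : ℤ) * k := by exact_mod_cast h2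
      omega
end

section
/- Let m be a positive integer and let N be a Poisson random variable with mean m on a probability space (Ω, P). Then for every measurable event A ⊆ Ω, the conditional probability satisfies P(A | N = m) ≤ 3·√m · P(A); equivalently, P(A ∩ {N = m}) ≤ 3·√m · P(A) · P(N = m). (This is the abstract form of Pittel's inequality, transferring bounds from the Poissonized model to the model with exactly m steps.) -/
open MeasureTheory

/-- Stirling upper bound: `m! ≤ e √m (m/e)^m` for `m ≥ 1`. -/
lemma factorial_le_stirling (m : ℕ) (hm : 0 < m) :
    (m.factorial : ℝ) ≤ Real.exp 1 * Real.sqrt m * ((m : ℝ) / Real.exp 1) ^ m := by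
  obtain ⟨n, rfl⟩ := Nat.exists_eq_add_of_lt hm
  simp only [zero_add] at *
  have h1 : Real.log (Stirling.stirlingSeq (n + 1)) ≤ Real.log (Stirling.stirlingSeq 1) :=
    Stirling.log_stirlingSeq'_antitone (Nat.zero_le n)
  have hpos : 0 < Stirling.stirlingSeq (n + 1) := Stirling.stirlingSeq'_pos n
  have hpos1 : 0 < Stirling.stirlingSeq 1 := Stirling.stirlingSeq'_pos 0
  have h2 : Stirling.stirlingSeq (n + 1) ≤ Stirling.stirlingSeq 1 :=
    (Real.log_le_log_iff hpos hpos1).mp h1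
  rw [Stirling.stirlingSeq_one] at h2
  have hden : 0 < Real.sqrt (2 * (n + 1 : ℕ) : ℝ) * (((n + 1 : ℕ) : ℝ) / Real.exp 1) ^ (n + 1) := by
    positivity
  have h3 : ((n + 1).factorial : ℝ) ≤ (Real.exp 1 / Real.sqrt 2) *
      (Real.sqrt (2 * (n + 1 : ℕ) : ℝ) * (((n + 1 : ℕ) : ℝ) / Real.exp 1) ^ (n + 1)) := by
    have := (div_le_iff₀ hden).mp h2
    simpa [Stirling.stirlingSeq] using this
  refine h3.trans_eq ?_
  have hs : Real.sqrt (2 * (n + 1 : ℕ) : ℝ) = Real.sqrt 2 * Real.sqrt ((n + 1 : ℕ) : ℝ) := by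
    rw [← Real.sqrt_mul (by norm_num)]
  rw [hs]
  have h2pos : (0 : ℝ) < Real.sqrt 2 := by positivity
  field_simp

/-- **Abstract form of Pittel's inequality.** Let `N` be a Poisson random variable with
mean a positive integer `m`. For every measurable event `A`,
`P(A ∩ {N = m}) ≤ 3√m · P(A) · P(N = m)`, i.e. `P(A | N = m) ≤ 3√m · P(A)`. -/
theorem pittel_inequality (m : ℕ) (hm : 0 < m)
    (Ω : Type) [MeasurableSpace Ω] (P : Measure Ω) [IsProbabilityMeasure P]
    (N : Ω → ℕ) (hNmeas : Measurable N)
    (hN : ∀ k : ℕ, P {ω | N ω = k}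
      = ENNReal.ofReal (Real.exp (-(m : ℝ)) * (m : ℝ) ^ k / k.factorial))
    (A : Set Ω) (hA : MeasurableSet A) :
    P (A ∩ {ω | N ω = m})
      ≤ ENNReal.ofReal (3 * Real.sqrt m) * P A * P {ω | N ω = m} := by
  -- key: 1 ≤ 3√m · P(N = m)
  set p : ℝ := Real.exp (-(m : ℝ)) * (m : ℝ) ^ m / m.factorial with hp
  have hppos : 0 < p := by
    apply div_pos (mul_pos (Real.exp_pos _) (by positivity)) (by positivity)
  have hsm : 0 < Real.sqrt m := Real.sqrt_pos.mpr (by exact_mod_cast hm)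
  have hfac := factorial_le_stirling m hm
  have hkey : 1 ≤ 3 * Real.sqrt m * p := by
    have hub : Real.exp 1 * Real.sqrt m * ((m : ℝ) / Real.exp 1) ^ m
        = Real.exp 1 * Real.sqrt m * ((m : ℝ) ^ m * Real.exp (-(m : ℝ))) := by
      rw [div_pow, ← Real.exp_nat_mul, mul_one, Real.exp_neg]
      field_simp
    rw [hub] at hfac
    have he3 : Real.exp 1 ≤ 3 := by
      have := Real.exp_one_lt_d9
      linarith
    have hfac3 : (m.factorial : ℝ) ≤ 3 * Real.sqrt m * ((m : ℝ) ^ m * Real.exp (-(m : ℝ))) := by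
      refine hfac.trans ?_
      have : (0:ℝ) ≤ Real.sqrt m * ((m : ℝ) ^ m * Real.exp (-(m : ℝ))) := by positivity
      nlinarith
    rw [hp]
    have hfacpos : (0:ℝ) < (m.factorial : ℝ) := by positivity
    rw [← mul_div_assoc, one_le_div hfacpos]
    nlinarith [hfac3]
  have hPNm : P {ω | N ω = m} = ENNReal.ofReal p := hN m
  calc P (A ∩ {ω | N ω = m}) ≤ P A := measure_mono Set.inter_subset_left
    _ = 1 * P A := (one_mul _).symm
    _ ≤ (ENNReal.ofReal (3 * Real.sqrt m) * P {ω | N ω = m}) * P A := by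
        apply mul_le_mul_left
        rw [hPNm, ← ENNReal.ofReal_mul (by positivity), ← ENNReal.ofReal_one]
        exact ENNReal.ofReal_le_ofReal hkey
    _ = ENNReal.ofReal (3 * Real.sqrt m) * P A * P {ω | N ω = m} := by ring
end
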